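/- Let α = (a_1 < ... < a_ℓ) ⊆ {1,...,m} and let 𝒜 = (A_1 ⊂ ... ⊂ A_ℓ) and ℬ = (B_1 ⊂ ... ⊂ B_ℓ) be two α-flags in V = F^m (i.e. dim A_i = dim B_i = a_i). Let α_nc = {a_i ∈ α : a_i + 1 ∉ α}. If A_i = B_i for all i with a_i ∈ α_nc, then the Schubert varieties coincide: {W : dim W = ℓ, ∀i dim(W ∩ A_i) ≥ i} = {W : dim W = ℓ, ∀i dim(W ∩ B_i) ≥ i}. -/

import Mathlib

open Module

/-- Auxiliary: the Schubert conditions are determined by the conditions at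
nonconsecutive indices. -/
lemma schubert_aux
    (F : Type*) [Field F] (m ℓ : ℕ)
    (a : Fin ℓ → ℕ) (ha : StrictMono a)
    (A : Fin ℓ → Submodule F (Fin m → F))
    (hAmono : StrictMono A)
    (hdA : ∀ i, finrank F ↥(A i) = a i)
    (W : Submodule F (Fin m → F))
    (h : ∀ i : Fin ℓ, (¬ ∃ j : Fin ℓ, a j = a i + 1) →
        (i : ℕ) + 1 ≤ finrank F ↥(W ⊓ A i)) :
    ∀ i : Fin ℓ, (i : ℕ) + 1 ≤ finrank F ↥(W ⊓ A i) := by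
  suffices H : ∀ k, ∀ i : Fin ℓ, ℓ - (i : ℕ) ≤ k → (i : ℕ) + 1 ≤ finrank F ↥(W ⊓ A i) by
    intro i; exact H ℓ i (Nat.sub_le _ _)
  intro k
  induction k with
  | zero => intro i hi; exact absurd hi (by have := i.isLt; omega)
  | succ k ih =>
    intro i hi
    by_cases hc : ∃ j : Fin ℓ, a j = a i + 1
    · obtain ⟨j, hj⟩ := hc
      have hij : i < j := ha.lt_iff_lt.mp (by omega)
      have hlt : (i : ℕ) + 1 < ℓ := by
        have := j.isLt
        have : (i : ℕ) < (j : ℕ) := hij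
        omega
      set i' : Fin ℓ := ⟨(i : ℕ) + 1, hlt⟩ with hi'def
      have hii' : i < i' := by
        simp only [Fin.lt_def, hi'def]; omega
      have hai' : a i' = a i + 1 := by
        have h1 : a i < a i' := ha hii'
        have h2 : a i' ≤ a j := by
          rcases lt_or_eq_of_le (show i' ≤ j from by
            simp only [Fin.le_def, hi'def]; exact hij) with h' | h'
          · exact le_of_lt (ha h')
          · rw [h']
        omega
      -- condition at i'
      have hcond : (i' : ℕ) + 1 ≤ finrank F ↥(W ⊓ A i') := by
        apply ih
        simp only [hi'def]
        omega
      -- dimension argument: finrank (W ⊓ A i') ≤ finrank (W ⊓ A i) + 1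
      have hle : A i ≤ A i' := le_of_lt (hAmono hii')
      have hsup : (W ⊓ A i') ⊔ A i ≤ A i' := sup_le inf_le_right hle
      have hfin : finrank F ↥((W ⊓ A i') ⊔ A i) ≤ a i + 1 := by
        calc finrank F ↥((W ⊓ A i') ⊔ A i) ≤ finrank F ↥(A i') :=
              Submodule.finrank_mono hsup
          _ = a i + 1 := by rw [hdA, hai']
      have hkey := Submodule.finrank_sup_add_finrank_inf_eq (W ⊓ A i') (A i)
      have hinf : (W ⊓ A i') ⊓ A i = W ⊓ A i := by
        rw [inf_assoc, inf_eq_right.mpr hle]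
      rw [hinf, hdA] at hkey
      have : finrank F ↥(W ⊓ A i') ≤ finrank F ↥(W ⊓ A i) + 1 := by omega
      have : (i : ℕ) + 2 ≤ finrank F ↥(W ⊓ A i') := by
        simp [hi'def] at hcond; omega
      omega
    · exact h i hc

/-- If two α-flags 𝒜 and ℬ agree on all indices in the nonconsecutive
subset α_nc = {a_i ∈ α : a_i + 1 ∉ α}, then the Schubert varieties coincide. -/
theorem schubert_eq_of_eq_on_nonconsecutive
    (F : Type*) [Field F] (m ℓ : ℕ)
    (a : Fin ℓ → ℕ) (ha : StrictMono a) (hrange : ∀ j, 1 ≤ a j ∧ a j ≤ m)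
    (A B : Fin ℓ → Submodule F (Fin m → F))
    (hAmono : StrictMono A) (hBmono : StrictMono B)
    (hdA : ∀ i, finrank F ↥(A i) = a i) (hdB : ∀ i, finrank F ↥(B i) = a i)
    (hnc : ∀ i : Fin ℓ, (¬ ∃ j : Fin ℓ, a j = a i + 1) → A i = B i) :
    {W : Submodule F (Fin m → F) |
        finrank F ↥W = ℓ ∧ ∀ i : Fin ℓ, (i : ℕ) + 1 ≤ finrank F ↥(W ⊓ A i)} =
    {W : Submodule F (Fin m → F) |
        finrank F ↥W = ℓ ∧ ∀ i : Fin ℓ, (i : ℕ) + 1 ≤ finrank F ↥(W ⊓ B i)} := by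
  ext W
  simp only [Set.mem_setOf_eq]
  constructor
  · rintro ⟨hW, hcond⟩
    refine ⟨hW, schubert_aux F m ℓ a ha B hBmono hdB W ?_⟩
    intro i hi
    rw [← hnc i hi]
    exact hcond i
  · rintro ⟨hW, hcond⟩
    refine ⟨hW, schubert_aux F m ℓ a ha A hAmono hdA W ?_⟩
    intro i hi
    rw [hnc i hi]
    exact hcond i
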